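/- Let η : ℝ^{n-1} → ℝ be a C² function, g, σ > 0 constants, and n the upward unit normal n = (-∇η, 1)/√(1+|∇η|²) to the graph of η. If gη = -σ ∇·n pointwise (mean-curvature equation with zero velocity), and η attains a positive maximum or a negative minimum, then a contradiction follows; in particular if η → 0 at infinity and attains its extrema, then η ≡ 0. -/

import Mathlib

open MeasureTheory Real Filter

noncomputable section

abbrev Euc (n : ℕ) := EuclideanSpace ℝ (Fin n)

def lapl {n : ℕ} (f : Euc n → ℝ) (x : Euc n) : ℝ :=
  ∑ i, fderiv ℝ (fun y => fderiv ℝ f y (EuclideanSpace.single i 1)) x (EuclideanSpace.single i 1)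

def diverg {n : ℕ} (A : Euc n → Euc n) (x : Euc n) : ℝ :=
  ∑ i, fderiv ℝ A x (EuclideanSpace.single i 1) i

def kelvinInv {n : ℕ} (x : Euc n) : Euc n := (‖x‖ ^ 2)⁻¹ • x

def lastIdx (n : ℕ) (hn : 0 < n) : Fin n := ⟨n - 1, Nat.sub_lt hn Nat.one_pos⟩

def eLast (n : ℕ) (hn : 0 < n) : Euc n := EuclideanSpace.single (lastIdx n hn) 1

def horiz {n : ℕ} (x : Euc n) : Euc (n - 1) :=
  WithLp.toLp 2 fun i => x ⟨i.val, lt_of_lt_of_le i.isLt (Nat.sub_le n 1)⟩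

def vert {n : ℕ} (hn : 0 < n) (x : Euc n) : ℝ := x (lastIdx n hn)

def mkPt {n : ℕ} (x' : Euc (n - 1)) (t : ℝ) : Euc n :=
  WithLp.toLp 2 fun j => if h : (j : ℕ) < n - 1 then x' ⟨j, h⟩ else t

/-- gradient vanishes at a global max. -/
lemma grad_zero_at_max {m : ℕ} (η : Euc m → ℝ) (x₀ : Euc m) (hx₀ : ∀ x, η x ≤ η x₀) :
    gradient η x₀ = 0 := by
  have hlm : IsLocalMax η x₀ := by
    apply IsMaxOn.isLocalMax (s := Set.univ)
    · intro x _; exact hx₀ x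
    · exact Filter.univ_mem
  have h0 : fderiv ℝ η x₀ = 0 := hlm.fderiv_eq_zero
  simp [gradient, h0]

/-- second directional derivative of gradient components at a global max is nonpositive. -/
lemma secderiv_nonpos {m : ℕ} (η : Euc m → ℝ) (hη : ContDiff ℝ 2 η) (x₀ : Euc m)
    (hx₀ : ∀ x, η x ≤ η x₀) (i : Fin m) :
    fderiv ℝ (gradient η) x₀ (EuclideanSpace.single i 1) i ≤ 0 := by
  set e : Euc m := EuclideanSpace.single i 1 with he
  have hv1 : ContDiff ℝ 1 (gradient η) := by
    have h1 : ContDiff ℝ 1 (fderiv ℝ η) := hη.fderiv_right (by norm_num)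
    exact ((InnerProductSpace.toDual ℝ (Euc m)).symm.contDiff).comp h1
  have hdη : Differentiable ℝ η := hη.differentiable (by norm_num)
  have hdv : Differentiable ℝ (gradient η) := hv1.differentiable (by norm_num)
  have hgrad0 : gradient η x₀ = 0 := grad_zero_at_max η x₀ hx₀
  -- line map
  set L : ℝ → Euc m := fun t => x₀ + t • e with hL
  have hLd : ∀ t, HasDerivAt L e t := by
    intro t
    exact (HasDerivAt.const_add x₀ ((hasDerivAt_id t).smul_const e)).congr_deriv (one_smul ℝ e)
  have hL0 : L 0 = x₀ := by simp [hL]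
  set φ : ℝ → ℝ := fun t => η (L t) with hφ
  set ψ : ℝ → ℝ := fun t => gradient η (L t) i with hψ
  -- fderiv η y e = gradient η y i
  have hinner : ∀ y, fderiv ℝ η y e = gradient η y i := by
    intro y
    have : fderiv ℝ η y = InnerProductSpace.toDual ℝ (Euc m) (gradient η y) := by
      simp [gradient]
    rw [this, InnerProductSpace.toDual_apply_apply, he]
    simpa using EuclideanSpace.inner_single_right (𝕜 := ℝ) i 1 (gradient η y)
  have hφ' : ∀ t, HasDerivAt φ (ψ t) t := by
    intro t
    have := (hdη (L t)).hasFDerivAt.comp_hasDerivAt t (hLd t)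
    rw [hinner (L t)] at this
    exact this
  -- derivative of ψ at 0
  set A : ℝ := fderiv ℝ (gradient η) x₀ e i with hA
  have hψ' : HasDerivAt ψ A 0 := by
    have h1 : HasDerivAt (fun t => gradient η (L t)) (fderiv ℝ (gradient η) (L 0) e) 0 :=
      (hdv (L 0)).hasFDerivAt.comp_hasDerivAt 0 (hLd 0)
    rw [hL0] at h1
    have h2 := (EuclideanSpace.proj (𝕜 := ℝ) i).hasFDerivAt.comp_hasDerivAt 0 h1
    exact h2
  have hψ0 : ψ 0 = 0 := by simp [hψ, hL0, hgrad0]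
  -- second derivative test
  by_contra hpos
  push_neg at hpos
  -- slope of ψ tends to A > 0
  have hslope : Tendsto (slope ψ 0) (nhdsWithin 0 {(0:ℝ)}ᶜ) (nhds A) :=
    hasDerivAt_iff_tendsto_slope.mp hψ'
  have hev : ∀ᶠ t in nhdsWithin 0 (Set.Ioi (0:ℝ)), 0 < ψ t := by
    have h1 : ∀ᶠ t in nhdsWithin 0 {(0:ℝ)}ᶜ, 0 < slope ψ 0 t :=
      hslope.eventually (eventually_gt_nhds hpos)
    have h2 : ∀ᶠ t in nhdsWithin 0 (Set.Ioi (0:ℝ)), 0 < slope ψ 0 t :=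
      h1.filter_mono (nhdsWithin_mono _ (fun t ht => ne_of_gt ht))
    filter_upwards [h2, self_mem_nhdsWithin] with t ht ht0
    have htpos : (0:ℝ) < t := ht0
    have : slope ψ 0 t = ψ t / t := by simp [slope_def_field, hψ0]
    rw [this] at ht
    exact (div_pos_iff.mp ht).resolve_right (fun h => absurd htpos (not_lt.mpr h.2.le)) |>.1
  obtain ⟨s, hs, hsub⟩ := hev.exists_mem
  obtain ⟨u, hu, hIoo⟩ := mem_nhdsGT_iff_exists_Ioo_subset.mp hs
  have hu0 : (0:ℝ) < u := hu
  -- φ strictly increasing on [0, u]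
  have hmono : StrictMonoOn φ (Set.Icc 0 u) := by
    apply strictMonoOn_of_deriv_pos (convex_Icc 0 u)
    · exact (hdη.continuous.comp (by continuity : Continuous L)).continuousOn
    · intro t ht
      rw [interior_Icc] at ht
      rw [(hφ' t).deriv]
      exact hsub t (hIoo ht)
  have : φ 0 < φ u := hmono (Set.left_mem_Icc.mpr hu0.le) (Set.right_mem_Icc.mpr hu0.le) hu0
  have hle : φ u ≤ φ 0 := by
    simpa [hφ, hL0] using hx₀ (L u)
  linarith

/-- at a global max the r.h.s. divergence is nonpositive, hence η(x₀) ≤ 0. -/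
lemma max_nonpos {m : ℕ} (η : Euc m → ℝ) (hη : ContDiff ℝ 2 η)
    (g σ : ℝ) (hg : 0 < g) (hσ : 0 < σ)
    (heq : ∀ x, g * η x
      = σ * diverg (fun y => (Real.sqrt (1 + ‖gradient η y‖ ^ 2))⁻¹ • gradient η y) x)
    (x₀ : Euc m) (hx₀ : ∀ x, η x ≤ η x₀) : η x₀ ≤ 0 := by
  have hv1 : ContDiff ℝ 1 (gradient η) := by
    have h1 : ContDiff ℝ 1 (fderiv ℝ η) := hη.fderiv_right (by norm_num)
    exact ((InnerProductSpace.toDual ℝ (Euc m)).symm.contDiff).comp h1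
  have hgrad0 : gradient η x₀ = 0 := grad_zero_at_max η x₀ hx₀
  set c : Euc m → ℝ := fun y => (Real.sqrt (1 + ‖gradient η y‖ ^ 2))⁻¹ with hc
  have hsq_pos : ∀ y, (0:ℝ) < 1 + ‖gradient η y‖ ^ 2 := fun y => by positivity
  have hcdiff : ContDiff ℝ 1 c := by
    apply ContDiff.inv
    · exact (contDiff_const.add (hv1.norm_sq ℝ)).sqrt (fun y => (hsq_pos y).ne')
    · intro y
      exact (Real.sqrt_pos.mpr (hsq_pos y)).ne'
  have hfd : fderiv ℝ (fun y => c y • gradient η y) x₀ = fderiv ℝ (gradient η) x₀ := by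
    rw [fderiv_fun_smul (hcdiff.differentiable (by norm_num) x₀) (hv1.differentiable (by norm_num) x₀)]
    have hc0 : c x₀ = 1 := by simp [hc, hgrad0]
    rw [hc0, hgrad0]
    ext w
    simp
  have hdiv : diverg (fun y => c y • gradient η y) x₀ ≤ 0 := by
    rw [diverg, ]
    apply Finset.sum_nonpos
    intro i _
    rw [hfd]
    exact secderiv_nonpos η hη x₀ hx₀ i
  have := heq x₀
  rw [show (fun y => (Real.sqrt (1 + ‖gradient η y‖ ^ 2))⁻¹ • gradient η y)
      = fun y => c y • gradient η y from rfl] at this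
  nlinarith [mul_nonpos_of_nonneg_of_nonpos hσ.le hdiv]

/-- A free surface with zero velocity satisfying `gη = -σ ∇·n` which decays at infinity
and attains its extrema must vanish identically. -/
theorem zero_velocity_surface_flat {n : ℕ} (η : Euc (n - 1) → ℝ) (hη : ContDiff ℝ 2 η)
    (g σ : ℝ) (hg : 0 < g) (hσ : 0 < σ)
    (heq : ∀ x, g * η x
      = σ * diverg (fun y => (Real.sqrt (1 + ‖gradient η y‖ ^ 2))⁻¹ • gradient η y) x)
    (hlim : Tendsto η (cocompact (Euc (n - 1))) (nhds 0))
    (hmax : ∃ x₀, ∀ x, η x ≤ η x₀) (hmin : ∃ x₁, ∀ x, η x₁ ≤ η x) :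
    ∀ x, η x = 0 := by
  obtain ⟨x₀, hx₀⟩ := hmax
  obtain ⟨x₁, hx₁⟩ := hmin
  have hmax0 : η x₀ ≤ 0 := max_nonpos η hη g σ hg hσ heq x₀ hx₀
  -- apply max lemma to -η
  have hgneg : ∀ y, gradient (fun x => -η x) y = -gradient η y := by
    intro y
    simp [gradient, fderiv_neg]
  have heqneg : ∀ x, g * (-η) x
      = σ * diverg (fun y => (Real.sqrt (1 + ‖gradient (fun x => -η x) y‖ ^ 2))⁻¹ •
          gradient (fun x => -η x) y) x := by
    intro x
    have hFneg : (fun y => (Real.sqrt (1 + ‖gradient (fun x => -η x) y‖ ^ 2))⁻¹ •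
          gradient (fun x => -η x) y)
        = fun y => -((Real.sqrt (1 + ‖gradient η y‖ ^ 2))⁻¹ • gradient η y) := by
      funext y
      rw [hgneg y, norm_neg, smul_neg]
    rw [hFneg]
    have hdivneg : diverg (fun y => -((Real.sqrt (1 + ‖gradient η y‖ ^ 2))⁻¹ • gradient η y)) x
        = - diverg (fun y => (Real.sqrt (1 + ‖gradient η y‖ ^ 2))⁻¹ • gradient η y) x := by
      simp [diverg, fderiv_neg, ← Finset.sum_neg_distrib]
    rw [hdivneg]
    simp only [Pi.neg_apply]
    rw [mul_neg, mul_neg, ← heq x]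
  have hmin0 : -η x₁ ≤ 0 := by
    have := max_nonpos (fun x => -η x) hη.neg g σ hg hσ heqneg x₁ (fun x => by
      simpa using hx₁ x)
    simpa using this
  intro x
  have h1 := hx₀ x
  have h2 := hx₁ x
  linarith
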